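/- Let E be a finite-dimensional real vector space and b : E × E → ℝ a symmetric positive-definite bilinear form. Let W ⊆ E be a subspace and Ŵ := {σ ∈ E : b(σ,w) = 0 for all w ∈ W}. Let Υ : E × E × E → ℝ be trilinear, symmetric in its first two arguments, with Υ(σ,σ,σ) = 0 for all σ ∈ Ŵ. Let Z : E × E × E → ℝ be a trilinear map symmetric in its first two arguments with Z(α,α,α) = 0 for all α ∈ E and Z(α,α,σ) = Υ(α,α,σ) for all α ∈ E, σ ∈ Ŵ. Let μ : E → ℝ satisfy μ(α) ≥ 0 for all α, and let z : E → E satisfy z(0) = 0, b(z(α), α) = −μ(α) for all α ∈ E, and b(z(α), σ) = Υ(α,α,σ) for all α ∈ E and σ ∈ Ŵ. For each α ∈ E let w(α) ∈ E be the unique vector with b(w(α), β) = Z(α,α,β) for all β ∈ E, and define z_d(α) := z(α) − w(α). Then: b(z_d(α), α) = −μ(α) ≤ 0 for all α ∈ E, z_d(α) ∈ W for all α ∈ E, and z_d(0) = 0. -/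

import Mathlib

/-- algebraic core of Theorem 14, 'LCBeqCH': with `b` a symmetric
positive-definite bilinear form on a finite-dimensional real space `E`, `W ⊆ E` a
subspace with `b`-orthogonal complement `Ŵ = {σ | ∀ w ∈ W, b σ w = 0}`, `Υ` and `Z`
trilinear tensors as in Chang's construction, `μ ≥ 0`, `z : E → E` a force map of the
LCB method, and `w(α)` the unique vector with `b(w(α), β) = Z(α,α,β)`, the difference
`z_d(α) = z(α) − w(α)` satisfies the dissipativity conditions (szd):
`b(z_d(α), α) = −μ(α) ≤ 0`, `z_d(α) ∈ W`, and `z_d(0) = 0`. -/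
theorem lcb_force_decomposes_as_dissipative_plus_gyroscopic
    (E : Type*) [AddCommGroup E] [Module ℝ E] [FiniteDimensional ℝ E]
    (b : E →ₗ[ℝ] E →ₗ[ℝ] ℝ)
    (hb_symm : ∀ x y : E, b x y = b y x)
    (hb_pos : ∀ x : E, x ≠ 0 → 0 < b x x)
    (W : Submodule ℝ E)
    (Y : E →ₗ[ℝ] E →ₗ[ℝ] E →ₗ[ℝ] ℝ)
    (hYsymm : ∀ a c d : E, Y a c d = Y c a d)
    (hY0 : ∀ σ : E, (∀ w ∈ W, b σ w = 0) → Y σ σ σ = 0)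
    (Z : E →ₗ[ℝ] E →ₗ[ℝ] E →ₗ[ℝ] ℝ)
    (hZsymm : ∀ a c d : E, Z a c d = Z c a d)
    (hZ0 : ∀ a : E, Z a a a = 0)
    (hZY : ∀ a σ : E, (∀ w ∈ W, b σ w = 0) → Z a a σ = Y a a σ)
    (μ : E → ℝ) (hμ : ∀ a : E, 0 ≤ μ a)
    (z : E → E) (hz0 : z 0 = 0)
    (hz1 : ∀ a : E, b (z a) a = -μ a)
    (hz2 : ∀ a σ : E, (∀ w ∈ W, b σ w = 0) → b (z a) σ = Y a a σ)
    (w : E → E) (hw : ∀ a c : E, b (w a) c = Z a a c) :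
    (∀ a : E, b (z a - w a) a = -μ a ∧ -μ a ≤ 0) ∧
    (∀ a : E, z a - w a ∈ W) ∧
    (z 0 - w 0 = 0) := by
  have hrefl : b.IsRefl := fun x y h => by rw [hb_symm]; exact h
  have hnd : LinearMap.BilinForm.Nondegenerate b := by
    refine hrefl.nondegenerate_iff_separatingLeft.mpr ?_
    intro x hx
    by_contra h
    exact (hb_pos x h).ne' (hx x)
  -- Ŵ is the b-orthogonal of W
  have hWhat : ∀ σ : E, (σ ∈ LinearMap.BilinForm.orthogonal b W) ↔ (∀ v ∈ W, b σ v = 0) := by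
    intro σ
    constructor
    · intro h v hv
      exact hrefl v σ (h v hv)
    · intro h v hv
      exact hrefl σ v (h v hv)
  have hww : LinearMap.BilinForm.orthogonal b (LinearMap.BilinForm.orthogonal b W) = W :=
    LinearMap.BilinForm.orthogonal_orthogonal hnd hrefl W
  refine ⟨?_, ?_, ?_⟩
  · intro a
    refine ⟨?_, neg_nonpos.mpr (hμ a)⟩
    have : b (z a - w a) a = b (z a) a - b (w a) a := by
      simp [map_sub]
    rw [this, hz1, hw, hZ0, sub_zero]
  · intro a
    rw [← hww]
    intro σ hσ
    have hσ' : ∀ v ∈ W, b σ v = 0 := (hWhat σ).mp hσ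
    have : b (z a - w a) σ = 0 := by
      have : b (z a - w a) σ = b (z a) σ - b (w a) σ := by simp [map_sub]
      rw [this, hz2 a σ hσ', hw, hZY a σ hσ', sub_self]
    exact hrefl _ _ this
  · have hw0 : w 0 = 0 := by
      apply hnd.1
      intro c
      rw [hw]
      simp
    rw [hz0, hw0, sub_zero]
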